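/- Let g:[a,b]→ℝ be left-continuous on (a,b) and increasing, and let f:[a,b]→ℝ be increasing and g-Lipschitz continuous with constant H. Then the continuous part f^C of f is g^C-Lipschitz continuous with constant H: |f^C(t)−f^C(s)| ≤ H|g^C(t)−g^C(s)| for all t,s ∈ [a,b]. -/

import Mathlib

open Set

/-- Right jump of a function: `u(t⁺) - u(t)`. -/
noncomputable def rjump (u : ℝ → ℝ) (t : ℝ) : ℝ := Function.rightLim u t - u t

/-- Cumulative jump part of `u` on `[a, t)`: `u^B(t) = Σ_{s ∈ [a,t)} Δ⁺u(s)`. -/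
noncomputable def jumpPart (u : ℝ → ℝ) (a t : ℝ) : ℝ :=
  ∑' s : ℝ, Set.indicator (Set.Ico a t) (fun v => rjump u v) s

/-- Continuous part of `u` (relative to the base point `a`): `u^C = u - u^B`. -/
noncomputable def contPart (u : ℝ → ℝ) (a t : ℝ) : ℝ := u t - jumpPart u a t

/-- `I` is the Kurzweil–Stieltjes integral `∫_a^b f dg`: for every `ε > 0` there is a
gauge `δ` such that every `δ`-fine tagged partition of `[a,b]` has Riemann–Stieltjes
sum within `ε` of `I`. -/
def IsKSIntegral (f g : ℝ → ℝ) (a b I : ℝ) : Prop :=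
  ∀ ε > (0:ℝ), ∃ δ : ℝ → ℝ, (∀ x, 0 < δ x) ∧
    ∀ (n : ℕ) (t ξ : ℕ → ℝ),
      t 0 = a → t n = b →
      (∀ i < n, t i < t (i + 1)) →
      (∀ i < n, t i ≤ ξ i ∧ ξ i ≤ t (i + 1)) →
      (∀ i < n, ξ i - δ (ξ i) < t i ∧ t (i + 1) < ξ i + δ (ξ i)) →
      |(∑ i ∈ Finset.range n, f (ξ i) * (g (t (i + 1)) - g (t i))) - I| < ε

/-- `f` is `g`-Lipschitz continuous on `[a,b]` with constant `H`. -/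
def GLipschitzOn (f g : ℝ → ℝ) (H a b : ℝ) : Prop :=
  ∀ t ∈ Set.Icc a b, ∀ s ∈ Set.Icc a b, |f t - f s| ≤ H * |g t - g s|

/-- `g` is left-continuous at every point of `s`. -/
def LeftContOn (g : ℝ → ℝ) (s : Set ℝ) : Prop :=
  ∀ t ∈ s, Filter.Tendsto g (nhdsWithin t (Set.Iio t)) (nhds (g t))

open Filter Topology Function

section Aux

variable {a b : ℝ}

/-- Projection-extension of a function on `[a,b]` to a global function. -/
noncomputable def extIcc (u : ℝ → ℝ) (a b : ℝ) : ℝ → ℝ := fun x => u (max a (min b x))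

lemma extIcc_mono {u : ℝ → ℝ} (hab : a ≤ b) (hu : MonotoneOn u (Set.Icc a b)) :
    Monotone (extIcc u a b) := by
  intro x y hxy
  have hx : max a (min b x) ∈ Set.Icc a b := ⟨le_max_left _ _, max_le hab (min_le_left _ _)⟩
  have hy : max a (min b y) ∈ Set.Icc a b := ⟨le_max_left _ _, max_le hab (min_le_left _ _)⟩
  exact hu hx hy (max_le_max le_rfl (min_le_min le_rfl hxy))

lemma extIcc_eq {u : ℝ → ℝ} {x : ℝ} (hx : x ∈ Set.Icc a b) : extIcc u a b x = u x := by
  have : max a (min b x) = x := by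
    rw [min_eq_right hx.2, max_eq_right hx.1]
  simp [extIcc, this]

lemma eventuallyEq_extIcc {u : ℝ → ℝ} {x : ℝ} (hx : x ∈ Set.Ico a b) :
    u =ᶠ[𝓝[>] x] extIcc u a b := by
  filter_upwards [Ioc_mem_nhdsGT_of_mem ⟨le_rfl, hx.2⟩] with y hy
  exact (extIcc_eq ⟨hx.1.trans hy.1.le, hy.2⟩).symm

lemma tendsto_rightLim_on {u : ℝ → ℝ} (hab : a ≤ b) (hu : MonotoneOn u (Set.Icc a b))
    {x : ℝ} (hx : x ∈ Set.Ico a b) :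
    Tendsto u (𝓝[>] x) (𝓝 (rightLim (extIcc u a b) x)) :=
  (((extIcc_mono hab hu).tendsto_rightLim x).congr'
    (eventuallyEq_extIcc hx).symm)

lemma rightLim_eq_extIcc {u : ℝ → ℝ} (hab : a ≤ b) (hu : MonotoneOn u (Set.Icc a b))
    {x : ℝ} (hx : x ∈ Set.Ico a b) :
    rightLim u x = rightLim (extIcc u a b) x :=
  rightLim_eq_of_tendsto
    (tendsto_rightLim_on hab hu hx)

lemma rjump_eq_extIcc {u : ℝ → ℝ} (hab : a ≤ b) (hu : MonotoneOn u (Set.Icc a b))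
    {x : ℝ} (hx : x ∈ Set.Ico a b) :
    rjump u x = rjump (extIcc u a b) x := by
  unfold rjump
  rw [rightLim_eq_extIcc hab hu hx, extIcc_eq ⟨hx.1, hx.2.le⟩]

lemma rjump_nonneg {U : ℝ → ℝ} (hU : Monotone U) (x : ℝ) : 0 ≤ rjump U x :=
  sub_nonneg.2 (hU.le_rightLim le_rfl)

/-- Finite sums of jumps of a monotone function on `[s,t)` are bounded by `U t - U s`. -/
lemma sum_rjump_le {U : ℝ → ℝ} (hU : Monotone U) (F : Finset ℝ) :
    ∀ s t : ℝ, s ≤ t → (∀ x ∈ F, x ∈ Set.Ico s t) → ∑ x ∈ F, rjump U x ≤ U t - U s := by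
  induction F using Finset.induction_on_max with
  | empty => intro s t hst _; simpa using hU hst
  | insert m F hmax ih =>
    intro s t hst hF
    have hm : m ∈ Set.Ico s t := hF m (Finset.mem_insert_self m F)
    rw [Finset.sum_insert (fun h => lt_irrefl m (hmax m h))]
    have h1 : ∑ x ∈ F, rjump U x ≤ U m - U s := by
      refine ih s m hm.1 fun x hx => ?_
      exact ⟨(hF x (Finset.mem_insert_of_mem hx)).1, hmax x hx⟩
    have h2 : rjump U m ≤ U t - U m := sub_le_sub_right (hU.rightLim_le hm.2) _
    linarith

end Aux

section Aux2

open Classical in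
lemma summable_ind_rjump' {U : ℝ → ℝ} (hU : Monotone U) {s t : ℝ} (hst : s ≤ t) :
    Summable (Set.indicator (Set.Ico s t) (rjump U)) := by
  refine summable_of_sum_le (c := U t - U s) (fun x => Set.indicator_nonneg
    (fun y _ => rjump_nonneg hU y) x) (fun G => ?_)
  classical
  have : ∑ x ∈ G, Set.indicator (Set.Ico s t) (rjump U) x
      = ∑ x ∈ G.filter (· ∈ Set.Ico s t), rjump U x :=
    Finset.sum_indicator_eq_sum_filter _ _ _ _
  rw [this]
  exact sum_rjump_le hU _ s t hst (fun x hx => (Finset.mem_filter.1 hx).2)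

open Classical in
lemma tsum_ind_rjump_le' {U : ℝ → ℝ} (hU : Monotone U) {s t : ℝ} (hst : s ≤ t) :
    ∑' x, Set.indicator (Set.Ico s t) (rjump U) x ≤ U t - U s := by
  refine Summable.tsum_le_of_sum_le (summable_ind_rjump' hU hst) (fun G => ?_)
  have : ∑ x ∈ G, Set.indicator (Set.Ico s t) (rjump U) x
      = ∑ x ∈ G.filter (· ∈ Set.Ico s t), rjump U x :=
    Finset.sum_indicator_eq_sum_filter _ _ _ _
  rw [this]
  exact sum_rjump_le hU _ s t hst (fun x hx => (Finset.mem_filter.1 hx).2)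

variable {a b : ℝ}

lemma ind_rjump_eq {u : ℝ → ℝ} (hab : a ≤ b) (hu : MonotoneOn u (Set.Icc a b))
    {s t : ℝ} (has : a ≤ s) (htb : t ≤ b) :
    Set.indicator (Set.Ico s t) (rjump u)
      = Set.indicator (Set.Ico s t) (rjump (extIcc u a b)) := by
  funext x
  by_cases hx : x ∈ Set.Ico s t
  · rw [Set.indicator_of_mem hx, Set.indicator_of_mem hx,
      rjump_eq_extIcc hab hu ⟨has.trans hx.1, hx.2.trans_le htb⟩]
  · rw [Set.indicator_of_notMem hx, Set.indicator_of_notMem hx]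

lemma summable_ind_rjump {u : ℝ → ℝ} (hab : a ≤ b) (hu : MonotoneOn u (Set.Icc a b))
    {s t : ℝ} (has : a ≤ s) (hst : s ≤ t) (htb : t ≤ b) :
    Summable (Set.indicator (Set.Ico s t) (rjump u)) := by
  rw [ind_rjump_eq hab hu has htb]
  exact summable_ind_rjump' (extIcc_mono hab hu) hst

lemma tsum_ind_rjump_le {u : ℝ → ℝ} (hab : a ≤ b) (hu : MonotoneOn u (Set.Icc a b))
    {s t : ℝ} (has : a ≤ s) (hst : s ≤ t) (htb : t ≤ b) :
    ∑' x, Set.indicator (Set.Ico s t) (rjump u) x ≤ u t - u s := by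
  rw [ind_rjump_eq hab hu has htb]
  calc ∑' x, Set.indicator (Set.Ico s t) (rjump (extIcc u a b)) x
      ≤ extIcc u a b t - extIcc u a b s := tsum_ind_rjump_le' (extIcc_mono hab hu) hst
    _ = u t - u s := by
        rw [extIcc_eq ⟨has.trans hst, htb⟩, extIcc_eq ⟨has, hst.trans htb⟩]

/-- Splitting of the jump part. -/
lemma jumpPart_split {u : ℝ → ℝ} (hab : a ≤ b) (hu : MonotoneOn u (Set.Icc a b))
    {s t : ℝ} (has : a ≤ s) (hst : s ≤ t) (htb : t ≤ b) :
    jumpPart u a t = jumpPart u a s + ∑' x, Set.indicator (Set.Ico s t) (rjump u) x := by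
  unfold jumpPart
  have hsplit : Set.indicator (Set.Ico a t) (rjump u)
      = Set.indicator (Set.Ico a s) (rjump u) + Set.indicator (Set.Ico s t) (rjump u) := by
    have h1 := Set.indicator_union_of_disjoint
      (Set.Ico_disjoint_Ico_same (a := a) (b := s) (c := t)) (rjump u)
    rw [Set.Ico_union_Ico_eq_Ico has hst] at h1
    exact h1
  rw [show (fun x => Set.indicator (Set.Ico a t) (rjump u) x)
      = Set.indicator (Set.Ico a t) (rjump u) from rfl, hsplit]
  exact Summable.tsum_add (summable_ind_rjump hab hu le_rfl has (hst.trans htb))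
    (summable_ind_rjump hab hu has hst htb)

lemma contPart_sub {u : ℝ → ℝ} (hab : a ≤ b) (hu : MonotoneOn u (Set.Icc a b))
    {s t : ℝ} (has : a ≤ s) (hst : s ≤ t) (htb : t ≤ b) :
    contPart u a t - contPart u a s
      = (u t - u s) - ∑' x, Set.indicator (Set.Ico s t) (rjump u) x := by
  unfold contPart
  rw [jumpPart_split hab hu has hst htb]
  ring

lemma contPart_mono {u : ℝ → ℝ} (hab : a ≤ b) (hu : MonotoneOn u (Set.Icc a b))
    {s t : ℝ} (has : a ≤ s) (hst : s ≤ t) (htb : t ≤ b) :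
    contPart u a s ≤ contPart u a t := by
  have := contPart_sub hab hu has hst htb
  have h2 := tsum_ind_rjump_le hab hu has hst htb
  linarith

end Aux2

section Main2

variable {a b : ℝ}

lemma rjump_combo {g f : ℝ → ℝ} (H : ℝ) (hab : a ≤ b)
    (hg : MonotoneOn g (Set.Icc a b)) (hfm : MonotoneOn f (Set.Icc a b))
    {x : ℝ} (hx : x ∈ Set.Ico a b) :
    rjump (fun y => H * g y - f y) x = H * rjump g x - rjump f x := by
  have tg := tendsto_rightLim_on hab hg hx
  have tf := tendsto_rightLim_on hab hfm hx
  have th : Filter.Tendsto (fun y => H * g y - f y) (nhdsWithin x (Set.Ioi x))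
      (nhds (H * Function.rightLim (extIcc g a b) x - Function.rightLim (extIcc f a b) x)) :=
    (tg.const_mul H).sub tf
  have hrl : Function.rightLim (fun y => H * g y - f y) x
      = H * Function.rightLim (extIcc g a b) x - Function.rightLim (extIcc f a b) x :=
    rightLim_eq_of_tendsto th
  unfold rjump
  rw [hrl, ← rightLim_eq_extIcc hab hg hx, ← rightLim_eq_extIcc hab hfm hx]
  ring

theorem contPart_gLipschitz_of_monotone'
    (a b H : ℝ) (hab : a ≤ b) (g f : ℝ → ℝ)
    (hg : MonotoneOn g (Set.Icc a b))
    (hfm : MonotoneOn f (Set.Icc a b))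
    (hf : GLipschitzOn f g H a b) :
    ∀ t ∈ Set.Icc a b, ∀ s ∈ Set.Icc a b,
      |contPart f a t - contPart f a s| ≤ H * |contPart g a t - contPart g a s| := by
  set h : ℝ → ℝ := fun y => H * g y - f y with hh_def
  have hh : MonotoneOn h (Set.Icc a b) := by
    intro x hx y hy hxy
    have hfl := hf y hy x hx
    rw [abs_of_nonneg (sub_nonneg.2 (hg hx hy hxy))] at hfl
    have h1 : f y - f x ≤ H * (g y - g x) := (le_abs_self _).trans hfl
    simp only [hh_def]
    linarith
  have key : ∀ t ∈ Set.Icc a b, ∀ s ∈ Set.Icc a b, s ≤ t →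
      |contPart f a t - contPart f a s| ≤ H * |contPart g a t - contPart g a s| := by
    intro t ht s hs hst
    have hDf0 : contPart f a s ≤ contPart f a t := contPart_mono hab hfm hs.1 hst ht.2
    have hDg0 : contPart g a s ≤ contPart g a t := contPart_mono hab hg hs.1 hst ht.2
    have hDh0 : contPart h a s ≤ contPart h a t := contPart_mono hab hh hs.1 hst ht.2
    have hcf := contPart_sub hab hfm hs.1 hst ht.2
    have hcg := contPart_sub hab hg hs.1 hst ht.2
    have hch := contPart_sub hab hh hs.1 hst ht.2
    have hind : Set.indicator (Set.Ico s t) (rjump h)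
        = fun x => H * Set.indicator (Set.Ico s t) (rjump g) x
            - Set.indicator (Set.Ico s t) (rjump f) x := by
      funext x
      by_cases hx : x ∈ Set.Ico s t
      · rw [Set.indicator_of_mem hx, Set.indicator_of_mem hx, Set.indicator_of_mem hx,
          rjump_combo H hab hg hfm ⟨hs.1.trans hx.1, hx.2.trans_le ht.2⟩]
      · rw [Set.indicator_of_notMem hx, Set.indicator_of_notMem hx,
          Set.indicator_of_notMem hx]
        ring
    have hsumg := summable_ind_rjump hab hg hs.1 hst ht.2
    have hsumf := summable_ind_rjump hab hfm hs.1 hst ht.2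
    have hJh : ∑' x, Set.indicator (Set.Ico s t) (rjump h) x
        = H * ∑' x, Set.indicator (Set.Ico s t) (rjump g) x
          - ∑' x, Set.indicator (Set.Ico s t) (rjump f) x := by
      rw [hind, Summable.tsum_sub (hsumg.mul_left H) hsumf, tsum_mul_left]
    have hht : h t = H * g t - f t := rfl
    have hhs : h s = H * g s - f s := rfl
    have hmain : contPart f a t - contPart f a s
        ≤ H * (contPart g a t - contPart g a s) := by
      rw [hcf, hcg]
      have h0 : 0 ≤ contPart h a t - contPart h a s := sub_nonneg.2 hDh0
      rw [hch, hJh, hht, hhs] at h0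
      ring_nf at h0 ⊢
      linarith
    rw [abs_of_nonneg (sub_nonneg.2 hDf0), abs_of_nonneg (sub_nonneg.2 hDg0)]
    exact hmain
  intro t ht s hs
  rcases le_total s t with hst | hst
  · exact key t ht s hs hst
  · rw [abs_sub_comm, abs_sub_comm (contPart g a t)]
    exact key s hs t ht hst


end Main2

/-- If `g : [a,b] → ℝ` is left-continuous on `(a,b)` and increasing and
`f` is increasing and `g`-Lipschitz with constant `H`, then the continuous part `f^C` is
`g^C`-Lipschitz with constant `H`. -/
theorem contPart_gLipschitz_of_monotone
    (a b H : ℝ) (hab : a ≤ b) (g f : ℝ → ℝ)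
    (hg : MonotoneOn g (Set.Icc a b))
    (hglc : LeftContOn g (Set.Ioo a b))
    (hfm : MonotoneOn f (Set.Icc a b))
    (hf : GLipschitzOn f g H a b) :
    ∀ t ∈ Set.Icc a b, ∀ s ∈ Set.Icc a b,
      |contPart f a t - contPart f a s| ≤ H * |contPart g a t - contPart g a s| :=
  contPart_gLipschitz_of_monotone' a b H hab g f hg hfm hf
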